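/- Let g be a nonnegative harmonic function on the open annulus A = {z : ρ < |z| < 2ρ} ⊂ ℂ, continuous on its closure, vanishing on the inner circle {|z| = ρ}. Suppose there is a constant m ≥ 1 such that g(z) ≤ m·g(z') for all z, z' with |z| = |z'| = 2ρ. Then g(z) ≤ m·g(z') for all z, z' in the closed annulus with |z| = |z'|. -/

import Mathlib

open MeasureTheory

/-- The Laplacian of a function `f : ℂ → ℝ`. -/
noncomputable def laplacian (f : ℂ → ℝ) (z : ℂ) : ℝ :=
  fderiv ℝ (fun w => fderiv ℝ f w 1) z 1 +
    fderiv ℝ (fun w => fderiv ℝ f w Complex.I) z Complex.I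

/-- `f` is harmonic on the set `s`: twice continuously differentiable with vanishing
Laplacian. -/
def HarmonicOnSet (f : ℂ → ℝ) (s : Set ℂ) : Prop :=
  ContDiffOn ℝ 2 f s ∧ ∀ z ∈ s, laplacian f z = 0

section Aux

open Metric Set Filter Topology

lemma eval_lemma {U : Set ℂ} {f : ℂ → ℝ} {z : ℂ}
    (hU : IsOpen U) (hf : ContDiffOn ℝ 2 f U) (hz : z ∈ U) (a : ℂ) :
    HasFDerivAt (fun w => fderiv ℝ f w a)
      ((ContinuousLinearMap.apply ℝ ℝ a).comp (fderiv ℝ (fderiv ℝ f) z)) z := by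
  have h1 : ContDiffAt ℝ 2 f z := (hf z hz).contDiffAt (hU.mem_nhds hz)
  have h2 : ContDiffAt ℝ 1 (fderiv ℝ f) z := h1.fderiv_right (by norm_num)
  have h3 : DifferentiableAt ℝ (fderiv ℝ f) z := h2.differentiableAt (by norm_num)
  exact (ContinuousLinearMap.apply ℝ ℝ a).hasFDerivAt.comp z h3.hasFDerivAt

lemma oneD_test {ψ ψd : ℝ → ℝ} {c : ℝ} (hmax : IsLocalMax ψ 0)
    (hder : ∀ᶠ t in 𝓝 (0:ℝ), HasDerivAt ψ (ψd t) t)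
    (hder2 : HasDerivAt ψd c 0) : c ≤ 0 := by
  by_contra hc
  push_neg at hc
  have h0 : ψd 0 = 0 := by
    have h := hmax.deriv_eq_zero
    rwa [hder.self_of_nhds.deriv] at h
  -- slope of ψd tends to c > 0
  have hslope : Tendsto (slope ψd 0) (𝓝[≠] 0) (𝓝 c) :=
    hasDerivAt_iff_tendsto_slope.mp hder2
  have hpos : ∀ᶠ t in 𝓝[≠] (0:ℝ), 0 < slope ψd 0 t :=
    hslope.eventually (eventually_gt_nhds hc)
  -- so ψd t > 0 for t in a right punctured nbhd
  have hpos' : ∀ᶠ t in 𝓝[>] (0:ℝ), 0 < ψd t := by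
    filter_upwards [nhdsWithin_mono (0:ℝ) (fun t (ht : t ∈ Set.Ioi 0) =>
        (ne_of_gt ht : t ≠ 0)) hpos, self_mem_nhdsWithin] with t ht ht'
    rw [slope_def_field, h0, sub_zero, sub_zero] at ht
    have := mul_pos ht (ht' : (0:ℝ) < t)
    rwa [div_mul_cancel₀] at this
    exact ne_of_gt ht'
  -- get δ with HasDerivAt ψ on ball δ, ψ ≤ ψ 0 on ball δ, ψd > 0 on (0, δ)
  obtain ⟨δ1, hδ1, hball1⟩ := Metric.eventually_nhds_iff.mp hder
  obtain ⟨δ2, hδ2, hball2⟩ := Metric.eventually_nhds_iff.mp hmax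
  obtain ⟨δ3, hδ3, hball3⟩ := Metric.mem_nhdsWithin_iff.mp hpos'
  set δ := min δ1 (min δ2 δ3) with hδdef
  have hδ : 0 < δ := lt_min hδ1 (lt_min hδ2 hδ3)
  set t1 := δ / 2 with ht1def
  have ht1 : 0 < t1 := by positivity
  have ht1δ : t1 < δ := half_lt_self hδ
  -- ψ strictly mono on [0, t1]
  have hmono : StrictMonoOn ψ (Set.Icc 0 t1) := by
    apply strictMonoOn_of_deriv_pos (convex_Icc _ _)
    · apply ContinuousOn.mono (s := Set.Icc 0 t1) ?_ le_rfl
      intro t ht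
      have : dist t 0 < δ1 := by
        rw [Real.dist_0_eq_abs, abs_of_nonneg ht.1]
        exact lt_of_le_of_lt ht.2 (lt_of_lt_of_le ht1δ (min_le_left _ _))
      exact ((hball1 this).differentiableAt).continuousAt.continuousWithinAt
    · intro t ht
      rw [interior_Icc] at ht
      have hd : dist t 0 < δ := by
        rw [Real.dist_0_eq_abs, abs_of_nonneg (le_of_lt ht.1)]
        exact lt_trans ht.2 ht1δ
      have h1 : HasDerivAt ψ (ψd t) t :=
        hball1 (lt_of_lt_of_le hd (min_le_left _ _))
      rw [h1.deriv]
      exact hball3 ⟨by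
        rw [Metric.mem_ball]
        exact lt_of_lt_of_le hd (le_trans (min_le_right _ _) (min_le_right _ _)), ht.1⟩
  have : ψ 0 < ψ t1 := hmono (Set.mem_Icc.mpr ⟨le_rfl, le_of_lt ht1⟩)
    (Set.mem_Icc.mpr ⟨le_of_lt ht1, le_rfl⟩) ht1
  have : ψ t1 ≤ ψ 0 := by
    apply hball2
    rw [Real.dist_0_eq_abs, abs_of_nonneg (le_of_lt ht1)]
    exact lt_of_lt_of_le ht1δ (le_trans (min_le_right _ _) (min_le_left _ _))
  linarith

lemma line_hasDerivAt (z v : ℂ) (t : ℝ) : HasDerivAt (fun t : ℝ => z + t • v) v t := by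
  simpa using ((hasDerivAt_id t).smul_const v).const_add z

lemma secondDeriv_nonpos {U : Set ℂ} {f : ℂ → ℝ} {z : ℂ}
    (hU : IsOpen U) (hf : ContDiffOn ℝ 2 f U) (hz : z ∈ U)
    (hmax : IsLocalMax f z) (v : ℂ) :
    fderiv ℝ (fun w => fderiv ℝ f w v) z v ≤ 0 := by
  set ψ : ℝ → ℝ := fun t => f (z + t • v) with hψ
  set ψd : ℝ → ℝ := fun t => fderiv ℝ f (z + t • v) v with hψd
  have hlinecont : Continuous (fun t : ℝ => z + t • v) := by continuity
  have hnhd : ∀ᶠ t in 𝓝 (0:ℝ), z + t • v ∈ U := by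
    have : Tendsto (fun t : ℝ => z + t • v) (𝓝 0) (𝓝 z) := by
      simpa using (hlinecont.tendsto 0)
    exact this.eventually (hU.eventually_mem hz)
  have hdiff : ∀ w ∈ U, DifferentiableAt ℝ f w := fun w hw =>
    ((hf.differentiableOn (by norm_num)) w hw).differentiableAt (hU.mem_nhds hw)
  have hder : ∀ᶠ t in 𝓝 (0:ℝ), HasDerivAt ψ (ψd t) t := by
    filter_upwards [hnhd] with t ht
    exact ((hdiff _ ht).hasFDerivAt).comp_hasDerivAt t (line_hasDerivAt z v t)
  have hmaxψ : IsLocalMax ψ 0 := by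
    have : Tendsto (fun t : ℝ => z + t • v) (𝓝 0) (𝓝 z) := by
      simpa using (hlinecont.tendsto 0)
    have h := this.eventually hmax
    simpa [IsLocalMax, IsMaxFilter, hψ] using h
  have heval := eval_lemma hU hf hz v
  have hder2 : HasDerivAt ψd
      (((ContinuousLinearMap.apply ℝ ℝ v).comp (fderiv ℝ (fderiv ℝ f) z)) v) 0 := by
    have heval' : HasFDerivAt (fun w => fderiv ℝ f w v)
        ((ContinuousLinearMap.apply ℝ ℝ v).comp (fderiv ℝ (fderiv ℝ f) z))
        (z + (0:ℝ) • v) := by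
      rw [show z + (0:ℝ) • v = z by simp]; exact heval
    have := heval'.comp_hasDerivAt 0 (line_hasDerivAt z v 0)
    exact this
  have := oneD_test hmaxψ hder hder2
  rwa [heval.fderiv]

lemma laplacian_nonpos_isLocalMax {U : Set ℂ} {f : ℂ → ℝ} {z : ℂ}
    (hU : IsOpen U) (hf : ContDiffOn ℝ 2 f U) (hz : z ∈ U)
    (hmax : IsLocalMax f z) : laplacian f z ≤ 0 := by
  have h1 := secondDeriv_nonpos hU hf hz hmax 1
  have h2 := secondDeriv_nonpos hU hf hz hmax Complex.I
  unfold laplacian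
  linarith

lemma fderiv2_eq {U : Set ℂ} {f : ℂ → ℝ} {z : ℂ}
    (hU : IsOpen U) (hf : ContDiffOn ℝ 2 f U) (hz : z ∈ U) (a b : ℂ) :
    fderiv ℝ (fun w => fderiv ℝ f w a) z b = (fderiv ℝ (fderiv ℝ f) z b) a := by
  rw [(eval_lemma hU hf hz a).fderiv]; rfl

lemma laplacian_eq {U : Set ℂ} {f : ℂ → ℝ} {z : ℂ}
    (hU : IsOpen U) (hf : ContDiffOn ℝ 2 f U) (hz : z ∈ U) :
    laplacian f z = (fderiv ℝ (fderiv ℝ f) z 1) 1 +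
      (fderiv ℝ (fderiv ℝ f) z Complex.I) Complex.I := by
  unfold laplacian
  rw [fderiv2_eq hU hf hz, fderiv2_eq hU hf hz]

lemma lap_comb {U : Set ℂ} {f g : ℂ → ℝ} {z : ℂ}
    (hU : IsOpen U) (hf : ContDiffOn ℝ 2 f U) (hg : ContDiffOn ℝ 2 g U) (hz : z ∈ U)
    (a b : ℝ) :
    laplacian (fun w => a * f w + b * g w) z = a * laplacian f z + b * laplacian g z := by
  have hdf : ∀ w ∈ U, DifferentiableAt ℝ f w := fun w hw =>
    ((hf.differentiableOn (by norm_num)) w hw).differentiableAt (hU.mem_nhds hw)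
  have hdg : ∀ w ∈ U, DifferentiableAt ℝ g w := fun w hw =>
    ((hg.differentiableOn (by norm_num)) w hw).differentiableAt (hU.mem_nhds hw)
  have key : ∀ v : ℂ, fderiv ℝ (fun w => fderiv ℝ (fun w' => a * f w' + b * g w') w v) z v
      = a * fderiv ℝ (fun w => fderiv ℝ f w v) z v + b * fderiv ℝ (fun w => fderiv ℝ g w v) z v := by
    intro v
    have heq : (fun w => fderiv ℝ (fun w' => a * f w' + b * g w') w v)
        =ᶠ[𝓝 z] (fun w => a * fderiv ℝ f w v + b * fderiv ℝ g w v) := by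
      filter_upwards [hU.eventually_mem hz] with w hw
      rw [fderiv_fun_add ((hdf w hw).const_mul a) ((hdg w hw).const_mul b),
        fderiv_const_mul (hdf w hw), fderiv_const_mul (hdg w hw)]
      simp
    rw [heq.fderiv_eq]
    have h1 := (eval_lemma hU hf hz v).differentiableAt
    have h2 := (eval_lemma hU hg hz v).differentiableAt
    rw [fderiv_fun_add (h1.const_mul a) (h2.const_mul b),
      fderiv_const_mul h1, fderiv_const_mul h2]
    simp
  unfold laplacian
  rw [key, key]
  ring

lemma lap_quad (z : ℂ) : laplacian (fun w : ℂ => w.re ^ 2) z = 2 := by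
  have hfd : ∀ w : ℂ, HasFDerivAt (fun w : ℂ => w.re ^ 2)
      ((2 * w.re) • Complex.reCLM) w := by
    intro w
    have h := (hasDerivAt_pow 2 w.re).comp_hasFDerivAt w Complex.reCLM.hasFDerivAt
    simpa [Function.comp_def] using h
  have h1 : (fun w : ℂ => fderiv ℝ (fun w : ℂ => w.re ^ 2) w 1) = fun w : ℂ => 2 * w.re := by
    ext w; rw [(hfd w).fderiv]; simp
  have h2 : (fun w : ℂ => fderiv ℝ (fun w : ℂ => w.re ^ 2) w Complex.I) = fun _ : ℂ => 0 := by
    ext w; rw [(hfd w).fderiv]; simp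
  unfold laplacian
  rw [h1, h2]
  have : HasFDerivAt (fun w : ℂ => 2 * w.re) ((2 : ℝ) • Complex.reCLM) z := by
    simpa using Complex.reCLM.hasFDerivAt.const_mul (2:ℝ)
  rw [this.fderiv, fderiv_fun_const]
  simp

lemma lap_rot {U : Set ℂ} {g : ℂ → ℝ} {z : ℂ} (c : ℂ) (hc : ‖c‖ = 1)
    (hU : IsOpen U) (hg : ContDiffOn ℝ 2 g U) (hz : c * z ∈ U) :
    laplacian (fun w => g (c * w)) z = laplacian g (c * z) := by
  set L : ℂ →L[ℝ] ℂ := (ContinuousLinearMap.mul ℝ ℂ) c with hL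
  have hLa : ∀ w, L w = c * w := fun w => rfl
  have hU' : IsOpen ((fun w => c * w) ⁻¹' U) := hU.preimage (by continuity)
  have hz' : z ∈ (fun w => c * w) ⁻¹' U := hz
  have hdg : ∀ w ∈ U, DifferentiableAt ℝ g w := fun w hw =>
    ((hg.differentiableOn (by norm_num)) w hw).differentiableAt (hU.mem_nhds hw)
  set M := fderiv ℝ (fderiv ℝ g) (c * z) with hM
  have key : ∀ a b : ℂ, fderiv ℝ (fun w => fderiv ℝ (fun w' => g (c * w')) w a) z b
      = (M (c * b)) (c * a) := by
    intro a b
    have heq : (fun w => fderiv ℝ (fun w' => g (c * w')) w a)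
        =ᶠ[𝓝 z] (fun w => fderiv ℝ g (c * w) (c * a)) := by
      filter_upwards [hU'.eventually_mem hz'] with w hw
      have h1 : HasFDerivAt (fun w' => g (c * w')) ((fderiv ℝ g (c * w)).comp L) w :=
        ((hdg _ hw).hasFDerivAt).comp w L.hasFDerivAt
      rw [h1.fderiv]; rfl
    rw [heq.fderiv_eq]
    -- the RHS function is (eval at c*a) ∘ (fderiv g) ∘ L
    have h2 : HasFDerivAt (fun w => fderiv ℝ g w (c * a))
        ((ContinuousLinearMap.apply ℝ ℝ (c * a)).comp M) (c * z) :=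
      eval_lemma hU hg hz (c * a)
    have h2' : HasFDerivAt (fun w => fderiv ℝ g w (c * a))
        ((ContinuousLinearMap.apply ℝ ℝ (c * a)).comp M) (L z) := h2
    have h3 : HasFDerivAt (fun w => fderiv ℝ g (c * w) (c * a))
        ((((ContinuousLinearMap.apply ℝ ℝ) (c * a)).comp M).comp L) z := h2'.comp z L.hasFDerivAt
    rw [h3.fderiv]; rfl
  have hcsq : c.re ^ 2 + c.im ^ 2 = 1 := by
    have := Complex.sq_norm c
    rw [hc] at this
    simpa [Complex.normSq_apply, sq] using this.symm
  have hc1 : c * 1 = c.re • (1:ℂ) + c.im • Complex.I := by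
    simp [Complex.ext_iff]
  have hcI : c * Complex.I = (-c.im) • (1:ℂ) + c.re • Complex.I := by
    simp [Complex.ext_iff]
  unfold laplacian
  rw [key, key, fderiv2_eq hU hg hz, fderiv2_eq hU hg hz, ← hM, hc1, hcI]
  simp only [map_add, _root_.map_smul, ContinuousLinearMap.add_apply, ContinuousLinearMap.smul_apply,
    ContinuousLinearMap.map_add, ContinuousLinearMap.map_smul, smul_eq_mul]
  linear_combination ((M 1) 1 + (M Complex.I) Complex.I) * hcsq

lemma max_principle (ρ : ℝ) (hρ : 0 < ρ) (h : ℂ → ℝ)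
    (hc : ContinuousOn h (Metric.closedBall 0 (2 * ρ) \ Metric.ball 0 ρ))
    (hC2 : ContDiffOn ℝ 2 h (Metric.ball 0 (2 * ρ) \ Metric.closedBall 0 ρ))
    (hlap : ∀ z ∈ Metric.ball (0:ℂ) (2 * ρ) \ Metric.closedBall 0 ρ, laplacian h z = 0)
    (hbd : ∀ z ∈ (Metric.closedBall (0:ℂ) (2 * ρ) \ Metric.ball 0 ρ) \
      (Metric.ball 0 (2 * ρ) \ Metric.closedBall 0 ρ), 0 ≤ h z) :
    ∀ z ∈ Metric.closedBall (0:ℂ) (2 * ρ) \ Metric.ball 0 ρ, 0 ≤ h z := by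
  set K := Metric.closedBall (0:ℂ) (2 * ρ) \ Metric.ball 0 ρ with hK
  set U := Metric.ball (0:ℂ) (2 * ρ) \ Metric.closedBall 0 ρ with hUdef
  have hUopen : IsOpen U := Metric.isOpen_ball.sdiff Metric.isClosed_closedBall
  have hUK : U ⊆ K := fun w hw => ⟨Metric.ball_subset_closedBall hw.1,
    fun hc' => hw.2 (Metric.ball_subset_closedBall hc')⟩
  have hKcompact : IsCompact K := (isCompact_closedBall 0 (2*ρ)).diff Metric.isOpen_ball
  have hKne : K.Nonempty := by
    refine ⟨(ρ : ℂ), ?_, ?_⟩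
    · simp [Complex.norm_of_nonneg hρ.le, abs_of_pos hρ]; linarith
    · simp [Complex.norm_of_nonneg hρ.le, abs_of_pos hρ]
  intro z0 hz0
  by_contra hneg
  push_neg at hneg
  set ε : ℝ := (-h z0) / (8 * ρ ^ 2) with hε
  have hεpos : 0 < ε := by
    apply div_pos (by linarith) (by positivity)
  -- u = -h + ε * re² attains its max on K
  set u : ℂ → ℝ := fun w => (-1) * h w + ε * w.re ^ 2 with hu
  have hquadC : ContDiff ℝ 2 (fun w : ℂ => w.re ^ 2) := by
    exact (Complex.reCLM.contDiff.pow 2)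
  have hucont : ContinuousOn u K := by
    apply ContinuousOn.add
    · exact (hc.const_smul (-1 : ℝ))
    · exact (hquadC.continuous.const_smul ε).continuousOn
  obtain ⟨w0, hw0K, hw0max⟩ := hKcompact.exists_isMaxOn hKne hucont
  have hw0bd : w0 ∉ U := by
    intro hw0U
    have hlocmax : IsLocalMax u w0 := by
      have : U ∈ nhds w0 := hUopen.mem_nhds hw0U
      filter_upwards [this] with w hw
      exact hw0max (hUK hw)
    have huC2 : ContDiffOn ℝ 2 u U := by
      apply ContDiffOn.add
      · exact hC2.const_smul (-1 : ℝ)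
      · exact ((hquadC.const_smul ε).contDiffOn)
    have h1 : laplacian u w0 = (-1) * laplacian h w0 +
        ε * laplacian (fun w : ℂ => w.re ^ 2) w0 :=
      lap_comb hUopen hC2 hquadC.contDiffOn hw0U (-1) ε
    rw [hlap w0 hw0U, lap_quad] at h1
    have h2 := laplacian_nonpos_isLocalMax hUopen huC2 hw0U hlocmax
    rw [h1] at h2
    nlinarith
  -- boundary estimate
  have hub : u w0 ≤ ε * (2 * ρ) ^ 2 := by
    have h0 : 0 ≤ h w0 := hbd w0 ⟨hw0K, hw0bd⟩
    have habs : ‖w0‖ ≤ 2 * ρ := by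
      have := hw0K.1
      simpa [Complex.dist_eq] using this
    have hre : w0.re ^ 2 ≤ (2 * ρ) ^ 2 := by
      have h1 : |w0.re| ≤ ‖w0‖ := Complex.abs_re_le_norm w0
      have h2 : |w0.re| ≤ 2 * ρ := h1.trans habs
      calc w0.re ^ 2 = |w0.re| ^ 2 := (sq_abs _).symm
        _ ≤ (2 * ρ) ^ 2 := by nlinarith [abs_nonneg w0.re]
    calc u w0 = -h w0 + ε * w0.re ^ 2 := by rw [hu]; ring
      _ ≤ 0 + ε * (2 * ρ) ^ 2 := by
          apply add_le_add (by linarith) ((mul_le_mul_iff_right₀ hεpos).mpr hre)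
      _ = ε * (2 * ρ) ^ 2 := by ring
  have := hw0max hz0
  have hz0u : u z0 = -h z0 + ε * z0.re ^ 2 := by rw [hu]; ring
  have hre0 : 0 ≤ ε * z0.re ^ 2 := by positivity
  have hfinal : -h z0 ≤ ε * (2 * ρ) ^ 2 := by
    have : u z0 ≤ u w0 := hw0max hz0
    linarith [this, hub, hz0u ▸ this]
  rw [hε] at hfinal
  have : -h z0 ≤ (-h z0) / (8 * ρ^2) * (2*ρ)^2 := hfinal
  have h8 : (0:ℝ) < 8 * ρ^2 := by positivity
  have hcalc : (-h z0) / (8 * ρ^2) * (2*ρ)^2 = (-h z0) / 2 := by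
    field_simp
    ring
  rw [hcalc] at this
  linarith

end Aux

/-- Harnack-type comparison on an annulus: a nonnegative harmonic function on
`{ρ < |z| < 2ρ}`, continuous up to the boundary and vanishing on the inner circle, which is
`m`-comparable on the outer circle, is `m`-comparable on every intermediate circle. -/
theorem stmt7 (ρ : ℝ) (hρ : 0 < ρ) (m : ℝ) (hm : 1 ≤ m) (g : ℂ → ℝ)
    (hcont : ContinuousOn g (Metric.closedBall 0 (2 * ρ) \ Metric.ball 0 ρ))
    (hharm : HarmonicOnSet g (Metric.ball 0 (2 * ρ) \ Metric.closedBall 0 ρ))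
    (hnonneg : ∀ z ∈ Metric.closedBall (0 : ℂ) (2 * ρ) \ Metric.ball 0 ρ, 0 ≤ g z)
    (hinner : ∀ z : ℂ, ‖z‖ = ρ → g z = 0)
    (houter : ∀ z z' : ℂ, ‖z‖ = 2 * ρ → ‖z'‖ = 2 * ρ → g z ≤ m * g z') :
    ∀ z z' : ℂ, ρ ≤ ‖z‖ → ‖z‖ ≤ 2 * ρ →
      ‖z'‖ = ‖z‖ → g z ≤ m * g z' := by
  intro z z' h1 h2 h3
  have hz'ne : z' ≠ 0 := by
    intro h0
    rw [h0] at h3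
    simp at h3
    rw [← h3] at h1
    linarith
  set c : ℂ := z / z' with hc
  have hzabs : ‖z‖ ≠ 0 := ne_of_gt (lt_of_lt_of_le hρ h1)
  have hcabs : ‖c‖ = 1 := by
    rw [hc, norm_div, h3, div_self hzabs]
  have hczz' : c * z' = z := div_mul_cancel₀ z hz'ne
  -- membership facts
  have memK : ∀ w : ℂ, ρ ≤ ‖w‖ → ‖w‖ ≤ 2 * ρ →
      w ∈ Metric.closedBall (0:ℂ) (2 * ρ) \ Metric.ball 0 ρ := by
    intro w hw1 hw2
    constructor
    · simpa [Complex.dist_eq] using hw2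
    · simp [Complex.dist_eq]
      exact hw1
  have absK : ∀ w : ℂ, w ∈ Metric.closedBall (0:ℂ) (2 * ρ) \ Metric.ball 0 ρ →
      ρ ≤ ‖w‖ ∧ ‖w‖ ≤ 2 * ρ := by
    intro w hw
    constructor
    · have := hw.2; simp [Complex.dist_eq] at this; exact this
    · have := hw.1; simpa [Complex.dist_eq] using this
  have absU : ∀ w : ℂ, w ∈ Metric.ball (0:ℂ) (2 * ρ) \ Metric.closedBall 0 ρ →
      ρ < ‖w‖ ∧ ‖w‖ < 2 * ρ := by
    intro w hw
    constructor
    · have := hw.2; simp [Complex.dist_eq] at this; exact this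
    · have := hw.1; simpa [Complex.dist_eq] using this
  have memU : ∀ w : ℂ, ρ < ‖w‖ → ‖w‖ < 2 * ρ →
      w ∈ Metric.ball (0:ℂ) (2 * ρ) \ Metric.closedBall 0 ρ := by
    intro w hw1 hw2
    constructor
    · simpa [Complex.dist_eq] using hw2
    · simp [Complex.dist_eq]; exact hw1
  -- rotation maps U to U, K to K
  have hrotU : ∀ w : ℂ, w ∈ Metric.ball (0:ℂ) (2 * ρ) \ Metric.closedBall 0 ρ →
      c * w ∈ Metric.ball (0:ℂ) (2 * ρ) \ Metric.closedBall 0 ρ := by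
    intro w hw
    obtain ⟨ha, hb⟩ := absU w hw
    apply memU <;> rw [norm_mul, hcabs, one_mul] <;> assumption
  have hrotK : ∀ w : ℂ, w ∈ Metric.closedBall (0:ℂ) (2 * ρ) \ Metric.ball 0 ρ →
      c * w ∈ Metric.closedBall (0:ℂ) (2 * ρ) \ Metric.ball 0 ρ := by
    intro w hw
    obtain ⟨ha, hb⟩ := absK w hw
    apply memK <;> rw [norm_mul, hcabs, one_mul] <;> assumption
  set h : ℂ → ℝ := fun w => m * g w + (-1) * g (c * w) with hh
  have hmulc : Continuous (fun w : ℂ => c * w) := by continuity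
  have hmulcC : ContDiff ℝ 2 (fun w : ℂ => c * w) :=
    (contDiff_const.mul contDiff_id)
  have hgrotC2 : ContDiffOn ℝ 2 (fun w => g (c * w))
      (Metric.ball (0:ℂ) (2 * ρ) \ Metric.closedBall 0 ρ) :=
    hharm.1.comp hmulcC.contDiffOn (fun w hw => hrotU w hw)
  have hUopen : IsOpen (Metric.ball (0:ℂ) (2 * ρ) \ Metric.closedBall 0 ρ) :=
    Metric.isOpen_ball.sdiff Metric.isClosed_closedBall
  have key := max_principle ρ hρ h
    (by
      apply ContinuousOn.add
      · exact hcont.const_smul m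
      · exact ((hcont.comp hmulc.continuousOn (fun w hw => hrotK w hw)).const_smul (-1:ℝ)))
    (by
      apply ContDiffOn.add
      · exact hharm.1.const_smul m
      · exact hgrotC2.const_smul (-1:ℝ))
    (by
      intro w hw
      have hl := lap_comb hUopen hharm.1 hgrotC2 hw m (-1)
      rw [hl, hharm.2 w hw, lap_rot c hcabs hUopen hharm.1 (hrotU w hw),
        hharm.2 _ (hrotU w hw)]
      ring)
    (by
      intro w ⟨hwK, hwU⟩
      obtain ⟨ha, hb⟩ := absK w hwK
      have : ‖w‖ = ρ ∨ ‖w‖ = 2 * ρ := by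
        by_contra hcon
        push_neg at hcon
        exact hwU (memU w (lt_of_le_of_ne ha (Ne.symm hcon.1)) (lt_of_le_of_ne hb hcon.2))
      rcases this with hr | hr
      · have e1 : g w = 0 := hinner w hr
        have e2 : g (c * w) = 0 := hinner _ (by rw [norm_mul, hcabs, one_mul]; exact hr)
        simp [hh, e1, e2]
      · have := houter (c * w) w (by rw [norm_mul, hcabs, one_mul]; exact hr) hr
        simp [hh]; linarith)
  have hz'K : z' ∈ Metric.closedBall (0:ℂ) (2 * ρ) \ Metric.ball 0 ρ := by
    apply memK <;> rw [h3] <;> assumption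
  have := key z' hz'K
  rw [hh] at this
  simp only [hczz'] at this
  linarith
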